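/- (Lemma 2.) Let L be the Laplacian matrix of a connected weighted undirected graph on n ≥ 2 vertices, let u ≠ v be vertices, let w > 0, set b := e_u − e_v, and let L' := L + w b b^T. For a Laplacian M write R_v(M) := n(M†)_{vv} + Tr(M†), where M† = (M + (1/n)J)^{-1} − (1/n)J. Then the decrease in resistance distance of v upon adding the edge satisfies R_v(L) − R_v(L') = w · ( n (L† b b^T L†)_{vv} + Tr(L† b b^T L†) ) / (1 + w · b^T L† b). -/

import Mathlib

open Matrix

section helpers
lemma vmv_mul_mul_vmv {n : ℕ} (b : Fin n → ℝ) (M : Matrix (Fin n) (Fin n) ℝ) :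
    vecMulVec b b * M * vecMulVec b b = (b ⬝ᵥ M *ᵥ b) • vecMulVec b b := by
  ext i j
  simp only [mul_apply, vecMulVec_apply, Matrix.smul_apply, smul_eq_mul, dotProduct, mulVec,
    Finset.sum_mul, Finset.mul_sum]
  rw [Finset.sum_comm]
  exact Finset.sum_congr rfl fun k _ => Finset.sum_congr rfl fun l _ => by ring

lemma lap_psd {n : ℕ} (L : Matrix (Fin n) (Fin n) ℝ)
    (hsym : L.IsSymm)
    (hoff : ∀ i j : Fin n, i ≠ j → L i j ≤ 0)
    (hrow : ∀ i : Fin n, ∑ j, L i j = 0) : L.PosSemidef := by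
  have hcol : ∀ j : Fin n, ∑ i, L i j = 0 := fun j => by
    have := hrow j
    simpa [fun i => hsym.apply j i] using this
  refine PosSemidef.of_dotProduct_mulVec_nonneg (by ext i j; simp [conjTranspose_apply, hsym.apply i j]) fun x => ?_
  rw [star_trivial]
  have key : ∀ i j, (-(L i j)) * (x i - x j)^2
      = 2 * (x i * (L i j * x j)) - L i j * x i^2 - L i j * x j^2 := fun i j => by ring
  have h1 : ∑ i, ∑ j, L i j * x i ^ 2 = 0 := by
    simp [← Finset.sum_mul, hrow]
  have h2 : ∑ i, ∑ j, L i j * x j ^ 2 = 0 := by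
    rw [Finset.sum_comm]
    simp [← Finset.sum_mul, hcol]
  have hquad : x ⬝ᵥ L *ᵥ x = 2⁻¹ * ∑ i, ∑ j, (-(L i j)) * (x i - x j)^2 := by
    simp_rw [key, Finset.sum_sub_distrib, ← Finset.mul_sum, h1, h2, sub_zero]
    rw [← mul_assoc]
    norm_num
    simp [dotProduct, mulVec, Finset.mul_sum]
  rw [hquad]
  have : 0 ≤ ∑ i, ∑ j, (-(L i j)) * (x i - x j)^2 := by
    refine Finset.sum_nonneg fun i _ => Finset.sum_nonneg fun j _ => ?_
    rcases eq_or_ne i j with rfl | h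
    · simp
    · exact mul_nonneg (by linarith [hoff i j h]) (sq_nonneg _)
  positivity
end helpers

theorem resistance_decrease_formula {n : ℕ} (hn : 2 ≤ n)
    (L : Matrix (Fin n) (Fin n) ℝ)
    (hsym : L.IsSymm)
    (hoff : ∀ i j : Fin n, i ≠ j → L i j ≤ 0)
    (hrow : ∀ i : Fin n, ∑ j, L i j = 0)
    (hker : ∀ x : Fin n → ℝ, L *ᵥ x = 0 ↔ ∃ c : ℝ, x = fun _ => c)
    (J : Matrix (Fin n) (Fin n) ℝ) (hJ : J = of fun _ _ => (1 : ℝ))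
    (u v : Fin n) (huv : u ≠ v) (w : ℝ) (hw : 0 < w)
    (b : Fin n → ℝ) (hb : b = Pi.single u 1 - Pi.single v 1)
    (L' : Matrix (Fin n) (Fin n) ℝ) (hL' : L' = L + w • vecMulVec b b)
    (dag : Matrix (Fin n) (Fin n) ℝ → Matrix (Fin n) (Fin n) ℝ)
    (hdag : ∀ M : Matrix (Fin n) (Fin n) ℝ,
      dag M = (M + (n : ℝ)⁻¹ • J)⁻¹ - (n : ℝ)⁻¹ • J)
    (Rv : Matrix (Fin n) (Fin n) ℝ → ℝ)
    (hRv : ∀ M : Matrix (Fin n) (Fin n) ℝ,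
      Rv M = (n : ℝ) * (dag M) v v + (dag M).trace) :
    Rv L - Rv L' =
      w * ((n : ℝ) * (dag L * vecMulVec b b * dag L) v v +
          (dag L * vecMulVec b b * dag L).trace) /
        (1 + w * (b ⬝ᵥ (dag L *ᵥ b))) := by
  have hn0 : (0:ℝ) < (n:ℝ) := by positivity
  set B : Matrix (Fin n) (Fin n) ℝ := vecMulVec b b with hB
  set K : Matrix (Fin n) (Fin n) ℝ := L + (n:ℝ)⁻¹ • J with hK
  have hL_psd : L.PosSemidef := lap_psd L hsym hoff hrow
  -- sum of b is zero
  have hbsum : ∑ i, b i = 0 := by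
    simp [hb, Finset.sum_sub_distrib]
  -- J facts
  have hJb : J *ᵥ b = 0 := by
    ext i; simp [hJ, mulVec, dotProduct, hbsum]
  have hJB : J * B = 0 := by
    ext i j
    simp [hJ, hB, mul_apply, vecMulVec_apply, ← Finset.sum_mul, hbsum]
  have hBJ : B * J = 0 := by
    ext i j
    simp [hJ, hB, mul_apply, vecMulVec_apply, ← Finset.mul_sum, hbsum]
  -- K is positive definite
  have hK_pd : K.PosDef := by
    refine PosDef.of_dotProduct_mulVec_pos ?_ ?_
    · ext i j
      simp [hK, hJ, conjTranspose_apply, hsym.apply i j, add_comm]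
    · intro x hx
      rw [star_trivial]
      have hJq : x ⬝ᵥ ((n:ℝ)⁻¹ • J) *ᵥ x = (n:ℝ)⁻¹ * (∑ i, x i)^2 := by
        simp [hJ, mulVec, dotProduct, Finset.mul_sum, Finset.sum_mul, sq]
        ring_nf
        rw [Finset.sum_comm]
        exact Finset.sum_congr rfl fun k _ => Finset.sum_congr rfl fun l _ => by ring
      have hsplit : x ⬝ᵥ K *ᵥ x = x ⬝ᵥ L *ᵥ x + (n:ℝ)⁻¹ * (∑ i, x i)^2 := by
        rw [hK, add_mulVec, dotProduct_add, hJq]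
      rw [hsplit]
      have h1 : 0 ≤ x ⬝ᵥ L *ᵥ x := by simpa using hL_psd.dotProduct_mulVec_nonneg x
      have h2 : 0 ≤ (n:ℝ)⁻¹ * (∑ i, x i)^2 := by positivity
      rcases lt_or_eq_of_le h1 with hlt | heq
      · linarith
      rcases lt_or_eq_of_le h2 with hlt | heq2
      · linarith
      -- both zero: contradiction with x ≠ 0
      exfalso
      have hLx : L *ᵥ x = 0 :=
        (hL_psd.dotProduct_mulVec_zero_iff x).mp (by rw [star_trivial]; exact heq.symm)
      have hsq : (∑ i, x i)^2 = 0 := by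
        rcases mul_eq_zero.mp heq2.symm with h | h
        · exact absurd h (by positivity)
        · exact h
      have hsum0 : ∑ i, x i = 0 := pow_eq_zero_iff two_ne_zero |>.mp hsq
      obtain ⟨c0, rfl⟩ := (hker x).mp hLx
      have hnc : (n:ℝ) * c0 = 0 := by simpa [mul_comm] using hsum0
      have hc0 : c0 = 0 := by
        rcases mul_eq_zero.mp hnc with h | h
        · exact absurd h hn0.ne'
        · exact h
      exact hx (funext fun i => hc0)
  have hKdet : IsUnit K.det := (Matrix.isUnit_iff_isUnit_det K).mp hK_pd.isUnit
  have hKK : K * K⁻¹ = 1 := mul_nonsing_inv _ hKdet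
  -- dag L in terms of K⁻¹
  have hdagL : dag L = K⁻¹ - (n:ℝ)⁻¹ • J := by rw [hdag, hK]
  have hKinv_eq : K⁻¹ = dag L + (n:ℝ)⁻¹ • J := by rw [hdagL]; abel
  -- K⁻¹ interacts with B and b like dag L
  have hKinvB : K⁻¹ * B = dag L * B := by
    rw [hKinv_eq, add_mul, smul_mul_assoc, hJB, smul_zero, add_zero]
  have hBKinv : B * K⁻¹ = B * dag L := by
    rw [hKinv_eq, mul_add, mul_smul_comm, hBJ, smul_zero, add_zero]
  have hKinvb : K⁻¹ *ᵥ b = dag L *ᵥ b := by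
    rw [hKinv_eq, add_mulVec, smul_mulVec, hJb, smul_zero, add_zero]
  set s : ℝ := b ⬝ᵥ (dag L *ᵥ b) with hs
  have hs_eq : b ⬝ᵥ (K⁻¹ *ᵥ b) = s := by rw [hKinvb]
  have hs_nonneg : 0 ≤ s := by
    have := hK_pd.inv.posSemidef.dotProduct_mulVec_nonneg b
    rwa [star_trivial, hs_eq] at this
  have hden : (0:ℝ) < 1 + w * s := by nlinarith
  set c : ℝ := w / (1 + w * s) with hc
  have hcw : c * (1 + w * s) = w := div_mul_cancel₀ w hden.ne'
  -- Sherman-Morrison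
  have hBKB : B * K⁻¹ * B = s • B := by rw [hB, vmv_mul_mul_vmv, ← hB, hs_eq]
  have hKN : (K + w • B) * (K⁻¹ - c • (K⁻¹ * B * K⁻¹)) = 1 := by
    have h1 : K * (K⁻¹ * B * K⁻¹) = B * K⁻¹ := by
      rw [← mul_assoc, ← mul_assoc, hKK, one_mul]
    have h2 : B * (K⁻¹ * B * K⁻¹) = s • (B * K⁻¹) := by
      rw [← mul_assoc, ← mul_assoc, hBKB, smul_mul_assoc]
    rw [add_mul, mul_sub, mul_sub, smul_mul_assoc, smul_mul_assoc, mul_smul_comm,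
      mul_smul_comm, hKK, h1, h2, smul_smul, smul_smul]
    have hcoef : w - c - w * c * s = 0 := by nlinarith [hcw]
    have hX : (1 : Matrix (Fin n) (Fin n) ℝ) - c • (B * K⁻¹) +
        (w • (B * K⁻¹) - (w * c * s) • (B * K⁻¹))
        = 1 + (w - c - w * c * s) • (B * K⁻¹) := by
      rw [sub_smul, sub_smul]
      abel
    rw [hX, hcoef, zero_smul, add_zero]
  have hinvKB : (K + w • B)⁻¹ = K⁻¹ - c • (K⁻¹ * B * K⁻¹) := inv_eq_right_inv hKN
  -- K⁻¹ B K⁻¹ = dag L B dag L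
  set P : Matrix (Fin n) (Fin n) ℝ := dag L * B * dag L with hP
  have hKBK : K⁻¹ * B * K⁻¹ = P := by rw [hKinvB, mul_assoc, hBKinv, ← mul_assoc]
  -- dag L'
  have hdagL' : dag L' = dag L - c • P := by
    rw [hdag, hL']
    have hre : L + w • B + (n:ℝ)⁻¹ • J = K + w • B := by rw [hK]; abel
    rw [hre, hinvKB, hKBK, hdagL]
    abel
  -- final computation
  rw [hRv, hRv, hdagL']
  have htr : (dag L - c • P).trace = (dag L).trace - c * P.trace := by
    rw [trace_sub, trace_smul]; simp
  have happ : (dag L - c • P) v v = dag L v v - c * P v v := by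
    simp [Matrix.sub_apply]
  rw [htr, happ]
  have : (n:ℝ) * (dag L) v v + (dag L).trace -
      ((n:ℝ) * ((dag L) v v - c * P v v) + ((dag L).trace - c * P.trace))
      = c * ((n:ℝ) * P v v + P.trace) := by ring
  rw [this, hc, div_mul_eq_mul_div]
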